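/- Let γ ∈ [1,2] and suppose f ∈ L^1(ℝ^d) with ∫ f = 0 and ∫ |y||f(y)| dy < ∞. Then for all r > 0, ‖T_r^E f‖_{L^γ}^γ ≤ C ‖f‖_{L^1}^{γ−1} ∫_{ℝ^d} r^q |r^{−E} y| |f(y)| dy, where C depends only on B (via the Lipschitz constant of its covariogram). -/

import Mathlib

open MeasureTheory

/-- For a real `d×d` matrix `E` and `r > 0`, `r^E := exp((log r) • E)`. -/
noncomputable def matPow {d : ℕ} (E : Matrix (Fin d) (Fin d) ℝ) (r : ℝ) :
    Matrix (Fin d) (Fin d) ℝ :=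
  NormedSpace.exp ((Real.log r) • E)

/-- The scaled and shifted set `B_E(x,r) = x + r^E B`. -/
noncomputable def ballE {d : ℕ} (E : Matrix (Fin d) (Fin d) ℝ)
    (B : Set (EuclideanSpace ℝ (Fin d))) (x : EuclideanSpace ℝ (Fin d)) (r : ℝ) :
    Set (EuclideanSpace ℝ (Fin d)) :=
  (fun y => x + Matrix.toEuclideanLin (matPow E r) y) '' B

/-- Kernel operator `T_r^E f (x) = ∫_{B_E(x,r)} f`. -/
noncomputable def TE {d : ℕ} (E : Matrix (Fin d) (Fin d) ℝ)
    (B : Set (EuclideanSpace ℝ (Fin d))) (r : ℝ)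
    (f : EuclideanSpace ℝ (Fin d) → ℝ) (x : EuclideanSpace ℝ (Fin d)) : ℝ :=
  ∫ y in ballE E B x r, f y

open NormedSpace

/-- Determinant as a continuous multilinear map in the rows. -/
noncomputable def detCMM (d : ℕ) :
    ContinuousMultilinearMap ℝ (fun _ : Fin d => (Fin d → ℝ)) ℝ :=
  (Matrix.detRowAlternating (n := Fin d) (R := ℝ)).toMultilinearMap.mkContinuous
    (Nat.factorial d) (by
      intro m
      have h1 : (Matrix.detRowAlternating (n := Fin d) (R := ℝ)).toMultilinearMap m
          = Matrix.det (Matrix.of m) := rfl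
      rw [h1, Matrix.det_apply]
      calc ‖∑ σ : Equiv.Perm (Fin d), Equiv.Perm.sign σ • ∏ i, Matrix.of m (σ i) i‖
          ≤ ∑ σ : Equiv.Perm (Fin d), ‖Equiv.Perm.sign σ • ∏ i, Matrix.of m (σ i) i‖ :=
            norm_sum_le _ _
        _ ≤ ∑ _σ : Equiv.Perm (Fin d), ∏ i, ‖m i‖ := by
            refine Finset.sum_le_sum fun σ _ => ?_
            have hs : ‖Equiv.Perm.sign σ • ∏ i, Matrix.of m (σ i) i‖
                = ‖∏ i, Matrix.of m (σ i) i‖ := by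
              rcases Int.units_eq_one_or (Equiv.Perm.sign σ) with h | h <;>
                simp [h, Units.smul_def]
            rw [hs]
            have h2 : ‖∏ i, Matrix.of m (σ i) i‖ ≤ ∏ i, ‖m (σ i)‖ := by
              rw [norm_prod]
              exact Finset.prod_le_prod (fun i _ => norm_nonneg _)
                (fun i _ => norm_le_pi_norm (m (σ i)) i)
            refine h2.trans_eq ?_
            exact Equiv.prod_comp σ fun i => ‖m i‖
        _ = (Nat.factorial d : ℝ) * ∏ i, ‖m i‖ := by
            rw [Finset.sum_const, Finset.card_univ, Fintype.card_perm]
            simp [nsmul_eq_mul, Fintype.card_fin])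

theorem Matrix.det_exp_real {d : ℕ} (A : Matrix (Fin d) (Fin d) ℝ) :
    (NormedSpace.exp A).det = Real.exp A.trace := by
  letI : SeminormedRing (Matrix (Fin d) (Fin d) ℝ) := Matrix.linftyOpSemiNormedRing
  letI : NormedRing (Matrix (Fin d) (Fin d) ℝ) := Matrix.linftyOpNormedRing
  letI : NormedAlgebra ℝ (Matrix (Fin d) (Fin d) ℝ) := Matrix.linftyOpNormedAlgebra
  -- the row-projection continuous linear maps
  set Lrow : ∀ _ : Fin d, Matrix (Fin d) (Fin d) ℝ →ₗ[ℝ] (Fin d → ℝ) :=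
    fun i => { toFun := fun M => M i, map_add' := fun _ _ => rfl,
               map_smul' := fun _ _ => rfl } with hLrow
  have hg : ∀ t : ℝ, HasDerivAt (fun t : ℝ => (exp (t • A)).det)
      (A.trace * (exp (t • A)).det) t := by
    intro t
    have hcurve : HasDerivAt (fun u : ℝ => exp (u • A)) (A * exp (t • A)) t :=
      hasDerivAt_exp_smul_const' A t
    have hrow : ∀ i, HasDerivAt (fun u : ℝ => exp (u • A) i)
        ((A * exp (t • A)) i) t := by
      intro i
      exact ((Lrow i).toContinuousLinearMap.hasFDerivAt.comp_hasDerivAt t hcurve)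
    have hd : HasDerivAt (fun u : ℝ => (detCMM d) (fun i => exp (u • A) i))
        (∑ i, (detCMM d) (Function.update (fun j => exp (t • A) j) i
          ((A * exp (t • A)) i))) t := by
      have := HasFDerivAt.multilinear_comp (detCMM d)
        (g := fun i (u : ℝ) => exp (u • A) i)
        (g' := fun i => ContinuousLinearMap.smulRight (1 : ℝ →L[ℝ] ℝ)
          ((A * exp (t • A)) i))
        (x := t) (fun i => (hrow i).hasFDerivAt)
      have h2 := this.hasDerivAt
      simpa using h2
    have hsum : (∑ i, (detCMM d) (Function.update (fun j => exp (t • A) j) i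
          ((A * exp (t • A)) i))) = A.trace * (exp (t • A)).det := by
      set M := exp (t • A) with hM
      have hAM : ∀ i, (A * M) i = ∑ k, A i k • M k := by
        intro i; funext j
        simp [Matrix.mul_apply, Finset.sum_apply, smul_eq_mul]
      have hterm : ∀ i, (detCMM d) (Function.update (fun j => M j) i ((A * M) i))
          = A i i * M.det := by
        intro i
        rw [hAM i]
        calc (detCMM d) (Function.update (fun j => M j) i (∑ k, A i k • M k))
            = ((detCMM d).toMultilinearMap.toLinearMap (fun j => M j) i)
                (∑ k, A i k • M k) := rfl
          _ = ∑ k, A i k • ((detCMM d).toMultilinearMap.toLinearMap (fun j => M j) i)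
                (M k) := by rw [map_sum]; simp only [LinearMap.map_smul]
          _ = ∑ k, A i k • (detCMM d) (Function.update (fun j => M j) i (M k)) := rfl
          _ = A i i * M.det := by
              rw [Finset.sum_eq_single i]
              · rw [Function.update_eq_self]
                have hdetM : (detCMM d) (fun j => M j) = M.det := rfl
                rw [hdetM, smul_eq_mul]
              · intro k _ hk
                have hzero : (detCMM d) (Function.update (fun j => M j) i (M k)) = 0 := by
                  have : (Matrix.detRowAlternating (n := Fin d) (R := ℝ))
                      (Function.update (fun j => M j) i (M k)) = 0 := by
                    refine AlternatingMap.map_eq_zero_of_eq _ _ (i := i) (j := k) ?_ (Ne.symm hk)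
                    rw [Function.update_self, Function.update_of_ne hk]
                  exact this
                rw [hzero, smul_zero]
              · intro h; exact absurd (Finset.mem_univ i) h
      rw [Finset.sum_congr rfl fun i _ => hterm i]
      rw [Matrix.trace]
      simp [Matrix.diag, Finset.sum_mul]
    have hdet : ∀ u : ℝ, (detCMM d) (fun i => exp (u • A) i) = (exp (u • A)).det := by
      intro u; rfl
    rw [hsum] at hd
    exact hd.congr_deriv rfl |>.congr_of_eventuallyEq (Filter.Eventually.of_forall fun u => (hdet u).symm) |>.congr_deriv rfl
  -- ODE part
  set c := A.trace with hc
  have hu : ∀ t : ℝ, HasDerivAt (fun t : ℝ => Real.exp (-(c * t)) * (exp (t • A)).det) 0 t := by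
    intro t
    have h1 : HasDerivAt (fun t : ℝ => Real.exp (-(c * t))) (-c * Real.exp (-(c * t))) t := by
      have : HasDerivAt (fun t : ℝ => -(c * t)) (-c) t := by
        exact (((hasDerivAt_id t).const_mul c).neg).congr_deriv (by ring)
      simpa [mul_comm] using this.exp
    have h2 := (h1.mul (hg t))
    refine h2.congr_deriv ?_
    ring
  have hconst : ∀ t : ℝ, Real.exp (-(c * t)) * (exp (t • A)).det
      = Real.exp (-(c * 0)) * (exp ((0:ℝ) • A)).det := by
    intro t
    exact is_const_of_deriv_eq_zero (fun x => (hu x).differentiableAt)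
      (fun x => (hu x).deriv) t 0
  have h0 : Real.exp (-(c * 0)) * (exp ((0:ℝ) • A)).det = 1 := by
    simp [NormedSpace.exp_zero]
  have h1 := hconst 1
  rw [h0, one_smul, mul_one, Real.exp_neg] at h1
  rw [hc] at h1
  have hpos : Real.exp A.trace ≠ 0 := Real.exp_ne_zero _
  field_simp at h1
  exact h1

section Aux

variable {d : ℕ}

/-- `matPow E r * matPow (-E) r = 1`. -/
theorem matPow_mul_matPow_neg (E : Matrix (Fin d) (Fin d) ℝ) (r : ℝ) :
    matPow E r * matPow (-E) r = 1 := by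
  rw [matPow, matPow, smul_neg]
  rw [← Matrix.exp_add_of_commute (Real.log r • E) _ (Commute.neg_right (Commute.refl _))]
  simp [NormedSpace.exp_zero]

theorem matPow_det (E : Matrix (Fin d) (Fin d) ℝ) {r : ℝ} (hr : 0 < r) :
    (matPow E r).det = r ^ (Matrix.trace E) := by
  rw [matPow, Matrix.det_exp_real, Matrix.trace_smul, smul_eq_mul,
    Real.rpow_def_of_pos hr, mul_comm]

end Aux

/-- If the covariogram of `B` satisfies `Leb(B Δ (z+B)) ≤ L|z|`, then for `γ ∈ [1,2]`
and every mean-zero `f` with finite first moment,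
`‖T_r^E f‖_{L^γ}^γ ≤ C ‖f‖_{L¹}^{γ-1} ∫ r^q |r^{-E} y| |f(y)| dy`
where `C` depends only on `B`. -/
theorem TE_meanzero_bound {d : ℕ} (E : Matrix (Fin d) (Fin d) ℝ)
    (B : Set (EuclideanSpace ℝ (Fin d))) (hBm : MeasurableSet B)
    (hBb : Bornology.IsBounded B) (hB0 : 0 < volume B) (hBfin : volume B < ⊤)
    (L : ℝ)
    (hLip : ∀ z : EuclideanSpace ℝ (Fin d),
      (volume (symmDiff B ((z + ·) '' B))).toReal ≤ L * ‖z‖) :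
    ∃ C : ℝ, 0 < C ∧ ∀ γ ∈ Set.Icc (1 : ℝ) 2,
      ∀ f : EuclideanSpace ℝ (Fin d) → ℝ, Integrable f → (∫ y, f y) = 0 →
      Integrable (fun y => ‖y‖ * |f y|) →
      ∀ r : ℝ, 0 < r →
      (eLpNorm (TE E B r f) (ENNReal.ofReal γ) volume) ^ γ ≤
        ENNReal.ofReal (C * (∫ y, |f y|) ^ (γ - 1) *
          ∫ y, r ^ (Matrix.trace E) *
            ‖Matrix.toEuclideanLin (matPow (-E) r) y‖ * |f y|) := by
  classical
  refine ⟨max L 1, lt_max_of_lt_right one_pos, ?_⟩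
  rintro γ ⟨hγ1, hγ2⟩ f hf hf0 hmom r hr
  set Lp : ℝ := max L 1 with hLpdef
  have hLp0 : (0:ℝ) ≤ Lp := le_max_of_le_right zero_le_one
  have hLip' : ∀ z : EuclideanSpace ℝ (Fin d),
      (volume (symmDiff B ((z + ·) '' B))).toReal ≤ Lp * ‖z‖ := fun z =>
    (hLip z).trans (mul_le_mul_of_nonneg_right (le_max_left _ _) (norm_nonneg z))
  set q : ℝ := Matrix.trace E with hq
  set M : EuclideanSpace ℝ (Fin d) →ₗ[ℝ] EuclideanSpace ℝ (Fin d) := Matrix.toEuclideanLin (matPow E r) with hM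
  set N : EuclideanSpace ℝ (Fin d) →ₗ[ℝ] EuclideanSpace ℝ (Fin d) := Matrix.toEuclideanLin (matPow (-E) r) with hN
  have hγ0 : (0:ℝ) < γ := lt_of_lt_of_le one_pos hγ1
  have hγ1' : (0:ℝ) ≤ γ - 1 := by linarith
  have hrq : (0:ℝ) < r ^ q := Real.rpow_pos_of_pos hr q
  -- inverses
  have hMul : matPow E r * matPow (-E) r = 1 := matPow_mul_matPow_neg E r
  have hMul' : matPow (-E) r * matPow E r = 1 := by
    have h := matPow_mul_matPow_neg (-E) r
    rwa [neg_neg] at h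
  have hMN : ∀ v, M (N v) = v := by
    intro v
    rw [hM, hN]
    simp [Matrix.toEuclideanLin_apply, Matrix.mulVec_mulVec, hMul]
  have hNM : ∀ v, N (M v) = v := by
    intro v
    rw [hM, hN]
    simp [Matrix.toEuclideanLin_apply, Matrix.mulVec_mulVec, hMul']
  have hNcont : Continuous N := N.continuous_of_finiteDimensional
  have hdetM : |LinearMap.det M| = r ^ q := by
    have h1 : LinearMap.det M = (matPow E r).det := by
      rw [hM, Matrix.toEuclideanLin_eq_toLin, LinearMap.det_toLin]
    rw [h1, matPow_det E hr, ← hq, abs_of_pos hrq]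
  -- membership in ballE
  have hmemBall : ∀ x y : EuclideanSpace ℝ (Fin d), y ∈ ballE E B x r ↔ N (y - x) ∈ B := by
    intro x y
    constructor
    · rintro ⟨b, hb, rfl⟩
      simpa [← hM, hNM] using hb
    · intro h
      refine ⟨N (y - x), h, ?_⟩
      show x + M (N (y - x)) = y
      rw [hMN]
      abel
  have hballMeas : ∀ x : EuclideanSpace ℝ (Fin d), MeasurableSet (ballE E B x r) := by
    intro x
    have he : ballE E B x r = (fun y => N (y - x)) ⁻¹' B := by
      ext y; exact hmemBall x y
    rw [he]
    exact (hNcont.comp (continuous_id.sub continuous_const)).measurable hBm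
  set S : EuclideanSpace ℝ (Fin d) → Set (EuclideanSpace ℝ (Fin d)) := fun y => (fun x => N (y - x)) ⁻¹' B with hS
  have hSmeas : ∀ y, MeasurableSet (S y) := by
    intro y
    exact (hNcont.comp (continuous_const.sub continuous_id)).measurable hBm
  set D : EuclideanSpace ℝ (Fin d) → Set (EuclideanSpace ℝ (Fin d)) := fun y => symmDiff (S y) (S 0) with hD
  have hDmeas : ∀ y, MeasurableSet (D y) := fun y =>
    ((hSmeas y).diff (hSmeas 0)).union ((hSmeas 0).diff (hSmeas y))
  have hψ : ∀ (ψ : EuclideanSpace ℝ (Fin d) →ₗ[ℝ] EuclideanSpace ℝ (Fin d)), ψ = -M →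
      Function.Injective ψ ∧ |LinearMap.det ψ| = r ^ q := by
    intro ψ hψdef
    constructor
    · intro a b hab
      rw [hψdef] at hab
      have h2 : M a = M b := by
        have := neg_inj.mp hab
        exact this
      have h3 := congrArg N h2
      rwa [hNM, hNM] at h3
    · have hsm : ψ = (-1 : ℝ) • M := by rw [hψdef]; ext v; simp
      rw [hsm, LinearMap.det_smul, abs_mul, abs_pow, abs_neg, abs_one, one_pow, one_mul, hdetM]
  have hDvol : ∀ y, volume (D y) ≤ ENNReal.ofReal (Lp * (r ^ q * ‖N y‖)) := by
    intro y
    set ψ : EuclideanSpace ℝ (Fin d) →ₗ[ℝ] EuclideanSpace ℝ (Fin d) := -M with hψdef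
    obtain ⟨hψinj, hψdet⟩ := hψ ψ rfl
    have hψapp : ∀ v, ψ v = -(M v) := fun v => rfl
    -- identify S y and S 0 as images under ψ
    have hSy : S y = ψ '' ((fun u => -(N y) + u) '' B) := by
      ext x
      simp only [hS, Set.mem_preimage, Set.mem_image]
      constructor
      · intro hx
        refine ⟨-(N y) + N (y - x), ⟨N (y - x), hx, rfl⟩, ?_⟩
        rw [hψapp, map_add, map_neg, hMN, hMN]
        abel
      · rintro ⟨u, ⟨b, hb, rfl⟩, rfl⟩
        rw [hψapp, map_add, map_neg, hMN]
        have h5 : y - -(-y + M b) = M b := by abel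
        rw [h5, hNM]
        exact hb
    have hS0 : S 0 = ψ '' B := by
      ext x
      simp only [hS, Set.mem_preimage, Set.mem_image]
      constructor
      · intro hx
        refine ⟨N (0 - x), hx, ?_⟩
        rw [hψapp, hMN]
        abel
      · rintro ⟨b, hb, rfl⟩
        rw [hψapp]
        have : (0 : EuclideanSpace ℝ (Fin d)) - -(M b) = M b := by abel
        rw [this, hNM]
        exact hb
    have hDim : D y = ψ '' (symmDiff ((fun u => -(N y) + u) '' B) B) := by
      rw [hD]
      simp only
      rw [hSy, hS0]
      exact (Set.image_symmDiff hψinj _ _).symm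
    -- translate invariance
    have htrans : volume ((fun u => -(N y) + u) '' B) = volume B := by
      have he : (fun u => -(N y) + u) '' B = (fun u => N y + u) ⁻¹' B := by
        ext u
        simp only [Set.mem_image, Set.mem_preimage]
        constructor
        · rintro ⟨b, hb, rfl⟩
          have : N y + (-(N y) + b) = b := by abel
          rwa [this]
        · intro hu
          exact ⟨N y + u, hu, by abel⟩
      rw [he, measure_preimage_add]
    have hfin : volume (symmDiff ((fun u => -(N y) + u) '' B) B) ≠ ⊤ := by
      refine ne_of_lt (lt_of_le_of_lt (measure_mono (Set.symmDiff_subset_union)) ?_)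
      refine lt_of_le_of_lt (measure_union_le _ _) ?_
      rw [htrans]
      exact ENNReal.add_lt_top.mpr ⟨hBfin, hBfin⟩
    have hb0 : (0:ℝ) ≤ Lp * ‖N y‖ := mul_nonneg hLp0 (norm_nonneg _)
    have hsd : volume (symmDiff ((fun u => -(N y) + u) '' B) B) ≤ ENNReal.ofReal (Lp * ‖N y‖) := by
      rw [ENNReal.le_ofReal_iff_toReal_le hfin hb0, symmDiff_comm]
      have := hLip' (-(N y))
      rwa [norm_neg] at this
    calc volume (D y)
        = ENNReal.ofReal (r ^ q) * volume (symmDiff ((fun u => -(N y) + u) '' B) B) := by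
          rw [hDim, MeasureTheory.Measure.addHaar_image_linearMap, hψdet]
      _ ≤ ENNReal.ofReal (r ^ q) * ENNReal.ofReal (Lp * ‖N y‖) := mul_le_mul_right hsd _
      _ = ENNReal.ofReal (Lp * (r ^ q * ‖N y‖)) := by
          rw [← ENNReal.ofReal_mul hrq.le]
          congr 1
          ring
  -- the pointwise kernel bound
  set gg : EuclideanSpace ℝ (Fin d) → ENNReal := fun x => ∫⁻ y, (D y).indicator (fun _ => (‖f y‖₊ : ENNReal)) x
    with hgg
  set A1 : ℝ := ∫ y, |f y| with hA1def
  have hA1 : (0:ℝ) ≤ A1 := integral_nonneg fun y => abs_nonneg _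
  have hTb1 : ∀ x, (‖TE E B r f x‖₊ : ENNReal) ≤ ENNReal.ofReal A1 := by
    intro x
    rw [← enorm_eq_nnnorm, Real.enorm_eq_ofReal_abs]
    refine ENNReal.ofReal_le_ofReal ?_
    rw [TE]
    calc |∫ y in ballE E B x r, f y| ≤ ∫ y in ballE E B x r, |f y| := by
          simpa [Real.norm_eq_abs] using
            norm_integral_le_integral_norm (μ := volume.restrict (ballE E B x r)) f
      _ ≤ A1 := by
          rw [hA1def]
          exact setIntegral_le_integral hf.abs
            (Filter.Eventually.of_forall fun y => abs_nonneg _)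
  have hTb2 : ∀ x, (‖TE E B r f x‖₊ : ENNReal) ≤ gg x := by
    intro x
    -- the kernel identity
    have h1 : (fun y => ((S y).indicator (fun _ => (1:ℝ)) x) * f y)
        = (ballE E B x r).indicator f := by
      funext y
      by_cases hy : y ∈ ballE E B x r
      · have hx : x ∈ S y := (hmemBall x y).1 hy
        rw [Set.indicator_of_mem hx, Set.indicator_of_mem hy, one_mul]
      · have hx : x ∉ S y := fun hc => hy ((hmemBall x y).2 hc)
        rw [Set.indicator_of_notMem hx, Set.indicator_of_notMem hy, zero_mul]
    have hint1 : Integrable (fun y => ((S y).indicator (fun _ => (1:ℝ)) x) * f y) := by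
      rw [h1]
      exact hf.indicator (hballMeas x)
    have hint2 : Integrable (fun y => ((S 0).indicator (fun _ => (1:ℝ)) x) * f y) :=
      hf.const_mul _
    have hker : TE E B r f x = ∫ y, (((S y).indicator (fun _ => (1:ℝ)) x)
        - ((S 0).indicator (fun _ => (1:ℝ)) x)) * f y := by
      have h2 : ∀ y, (((S y).indicator (fun _ => (1:ℝ)) x)
          - ((S 0).indicator (fun _ => (1:ℝ)) x)) * f y
          = ((S y).indicator (fun _ => (1:ℝ)) x) * f y
            - ((S 0).indicator (fun _ => (1:ℝ)) x) * f y := fun y => by ring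
      rw [TE, ← integral_indicator (hballMeas x), ← h1]
      rw [funext h2, integral_sub hint1 hint2, integral_const_mul, hf0, mul_zero, sub_zero]
    rw [hker]
    calc (‖∫ y, (((S y).indicator (fun _ => (1:ℝ)) x)
          - ((S 0).indicator (fun _ => (1:ℝ)) x)) * f y‖₊ : ENNReal)
        ≤ ∫⁻ y, ‖(((S y).indicator (fun _ => (1:ℝ)) x)
          - ((S 0).indicator (fun _ => (1:ℝ)) x)) * f y‖₊ :=
          enorm_integral_le_lintegral_enorm _
      _ ≤ gg x := by
          rw [hgg]
          refine lintegral_mono fun y => ?_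
          by_cases hxy : x ∈ S y <;> by_cases hx0 : x ∈ S 0
          · have hxd : x ∉ D y := by
              rw [hD]; simp only [Set.mem_symmDiff]; push_neg
              exact ⟨fun _ => hx0, fun _ => hxy⟩
            rw [Set.indicator_of_mem hxy, Set.indicator_of_mem hx0,
              Set.indicator_of_notMem hxd]
            simp
          · have hxd : x ∈ D y := by
              rw [hD]; simp only [Set.mem_symmDiff]
              exact Or.inl ⟨hxy, hx0⟩
            rw [Set.indicator_of_mem hxy, Set.indicator_of_notMem hx0,
              Set.indicator_of_mem hxd]
            simp
          · have hxd : x ∈ D y := by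
              rw [hD]; simp only [Set.mem_symmDiff]
              exact Or.inr ⟨hx0, hxy⟩
            rw [Set.indicator_of_notMem hxy, Set.indicator_of_mem hx0,
              Set.indicator_of_mem hxd]
            simp [nnnorm_mul]
          · have hxd : x ∉ D y := by
              rw [hD]; simp only [Set.mem_symmDiff]; push_neg
              exact ⟨fun h => absurd h hxy, fun h => absurd h hx0⟩
            rw [Set.indicator_of_notMem hxy, Set.indicator_of_notMem hx0,
              Set.indicator_of_notMem hxd]
            simp
  -- L^γ norm as lintegral
  have hLHS : (eLpNorm (TE E B r f) (ENNReal.ofReal γ) volume) ^ γ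
      = ∫⁻ x, (‖TE E B r f x‖₊ : ENNReal) ^ γ := by
    have hp0 : (ENNReal.ofReal γ) ≠ 0 := by
      simp only [ne_eq, ENNReal.ofReal_eq_zero, not_le]
      exact hγ0
    rw [eLpNorm_eq_lintegral_rpow_enorm_toReal hp0 ENNReal.ofReal_ne_top,
      ENNReal.toReal_ofReal hγ0.le, ← ENNReal.rpow_mul, one_div,
      inv_mul_cancel₀ (ne_of_gt hγ0), ENNReal.rpow_one]
    rfl
  -- pointwise power bound
  have hpt : ∀ x, (‖TE E B r f x‖₊ : ENNReal) ^ γ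
      ≤ ENNReal.ofReal (A1 ^ (γ - 1)) * gg x := by
    intro x
    by_cases h0 : (‖TE E B r f x‖₊ : ENNReal) = 0
    · rw [h0, ENNReal.zero_rpow_of_pos hγ0]
      exact bot_le
    · have hsplit : (‖TE E B r f x‖₊ : ENNReal) ^ γ
          = (‖TE E B r f x‖₊ : ENNReal) ^ (γ - 1) * (‖TE E B r f x‖₊ : ENNReal) ^ (1:ℝ) := by
        rw [← ENNReal.rpow_add _ _ h0 ENNReal.coe_ne_top]
        norm_num
      rw [hsplit, ENNReal.rpow_one]
      refine mul_le_mul' ?_ (hTb2 x)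
      calc (‖TE E B r f x‖₊ : ENNReal) ^ (γ - 1)
          ≤ (ENNReal.ofReal A1) ^ (γ - 1) := ENNReal.rpow_le_rpow (hTb1 x) hγ1'
        _ = ENNReal.ofReal (A1 ^ (γ - 1)) := ENNReal.ofReal_rpow_of_nonneg hA1 hγ1'
  -- Tonelli
  have hTon : ∫⁻ x, gg x = ∫⁻ y, (‖f y‖₊ : ENNReal) * volume (D y) := by
    set U : Set (EuclideanSpace ℝ (Fin d) × EuclideanSpace ℝ (Fin d)) :=
      {p | p.1 ∈ D p.2} with hU
    have hV : MeasurableSet {p : EuclideanSpace ℝ (Fin d) × EuclideanSpace ℝ (Fin d) |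
        p.1 ∈ S p.2} := by
      have he : {p : EuclideanSpace ℝ (Fin d) × EuclideanSpace ℝ (Fin d) | p.1 ∈ S p.2}
          = (fun p : EuclideanSpace ℝ (Fin d) × EuclideanSpace ℝ (Fin d) =>
              N (p.2 - p.1)) ⁻¹' B := rfl
      rw [he]
      exact ((hNcont.comp (continuous_snd.sub continuous_fst)).measurable) hBm
    have hW : MeasurableSet {p : EuclideanSpace ℝ (Fin d) × EuclideanSpace ℝ (Fin d) |
        p.1 ∈ S 0} := measurable_fst (hSmeas 0)
    have hUm : MeasurableSet U := by
      have he : U = symmDiff {p : EuclideanSpace ℝ (Fin d) × EuclideanSpace ℝ (Fin d) |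
          p.1 ∈ S p.2} {p : EuclideanSpace ℝ (Fin d) × EuclideanSpace ℝ (Fin d) | p.1 ∈ S 0} := by
        ext p
        simp only [hU, hD, Set.mem_setOf_eq, Set.mem_symmDiff]
      rw [he]
      exact (hV.diff hW).union (hW.diff hV)
    have hunc : Function.uncurry (fun x y =>
        (D y).indicator (fun _ => (‖f y‖₊ : ENNReal)) x)
        = U.indicator (fun p => (‖f p.2‖₊ : ENNReal)) := by
      funext p
      by_cases hp : p.1 ∈ D p.2
      · simp [Function.uncurry, Set.indicator_of_mem, hp, hU]
      · simp [Function.uncurry, Set.indicator_of_notMem, hp, hU]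
    have haem : AEMeasurable (Function.uncurry (fun x y =>
        (D y).indicator (fun _ => (‖f y‖₊ : ENNReal)) x)) (volume.prod volume) := by
      rw [hunc]
      exact (hf.1.comp_snd.enorm).indicator hUm
    rw [hgg]
    rw [lintegral_lintegral_swap haem]
    refine lintegral_congr fun y => ?_
    rw [lintegral_indicator (hDmeas y), setLIntegral_const]
  -- the first-moment integral
  set I : ℝ := ∫ y, r ^ q * ‖N y‖ * |f y| with hIdef
  have hInn : ∀ y, (0:ℝ) ≤ r ^ q * ‖N y‖ * |f y| := fun y =>
    mul_nonneg (mul_nonneg hrq.le (norm_nonneg _)) (abs_nonneg _)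
  have hI0 : (0:ℝ) ≤ I := integral_nonneg hInn
  have hIint : Integrable (fun y => r ^ q * ‖N y‖ * |f y|) := by
    have hmeas : AEStronglyMeasurable (fun y => r ^ q * ‖N y‖ * |f y|) volume :=
      ((continuous_const.mul hNcont.norm).aestronglyMeasurable).mul hf.abs.1
    refine Integrable.mono' (hmom.const_mul (r ^ q * ‖N.toContinuousLinearMap‖)) hmeas ?_
    refine Filter.Eventually.of_forall fun y => ?_
    rw [Real.norm_eq_abs, abs_of_nonneg (hInn y)]
    calc r ^ q * ‖N y‖ * |f y|
        ≤ r ^ q * (‖N.toContinuousLinearMap‖ * ‖y‖) * |f y| := by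
          refine mul_le_mul_of_nonneg_right (mul_le_mul_of_nonneg_left ?_ hrq.le) (abs_nonneg _)
          exact N.toContinuousLinearMap.le_opNorm y
      _ = r ^ q * ‖N.toContinuousLinearMap‖ * (‖y‖ * |f y|) := by ring
  have hIy : ∫⁻ y, (‖f y‖₊ : ENNReal) * volume (D y) ≤ ENNReal.ofReal (Lp * I) := by
    calc ∫⁻ y, (‖f y‖₊ : ENNReal) * volume (D y)
        ≤ ∫⁻ y, ENNReal.ofReal (Lp * (r ^ q * ‖N y‖ * |f y|)) := by
          refine lintegral_mono fun y => ?_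
          rw [← enorm_eq_nnnorm, Real.enorm_eq_ofReal_abs, mul_comm]
          calc volume (D y) * ENNReal.ofReal |f y|
              ≤ ENNReal.ofReal (Lp * (r ^ q * ‖N y‖)) * ENNReal.ofReal |f y| :=
                mul_le_mul_left (hDvol y) _
            _ = ENNReal.ofReal (Lp * (r ^ q * ‖N y‖ * |f y|)) := by
                rw [← ENNReal.ofReal_mul (mul_nonneg hLp0
                  (mul_nonneg hrq.le (norm_nonneg _)))]
                congr 1
                ring
      _ = ENNReal.ofReal (∫ y, Lp * (r ^ q * ‖N y‖ * |f y|)) :=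
          (ofReal_integral_eq_lintegral_ofReal (hIint.const_mul _)
            (Filter.Eventually.of_forall fun y => mul_nonneg hLp0 (hInn y))).symm
      _ = ENNReal.ofReal (Lp * I) := by
          rw [integral_const_mul, hIdef]
  -- final chain
  calc (eLpNorm (TE E B r f) (ENNReal.ofReal γ) volume) ^ γ
      = ∫⁻ x, (‖TE E B r f x‖₊ : ENNReal) ^ γ := hLHS
    _ ≤ ∫⁻ x, ENNReal.ofReal (A1 ^ (γ - 1)) * gg x := lintegral_mono hpt
    _ = ENNReal.ofReal (A1 ^ (γ - 1)) * ∫⁻ x, gg x :=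
        lintegral_const_mul' _ _ ENNReal.ofReal_ne_top
    _ ≤ ENNReal.ofReal (A1 ^ (γ - 1)) * ENNReal.ofReal (Lp * I) := by
        refine mul_le_mul_right ?_ _
        rw [hTon]; exact hIy
    _ = ENNReal.ofReal (max L 1 * A1 ^ (γ - 1) * I) := by
        rw [← ENNReal.ofReal_mul (Real.rpow_nonneg hA1 _)]
        rw [hLpdef]
        congr 1
        ring
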